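/- Let f be a C² diffeomorphism of I = [a, b] with no fixed points in (a, b), such that fⁿ(x) → a as n → ∞ for every x ∈ [a, b). Fix c ∈ (a, b) (so the intervals fⁿ([f(c), c]), n ∈ ℤ, tile (a, b)), and let h : [f(c), c] → [f(c), c] be a homeomorphism fixing the endpoints that is bi-Lipschitz with constant M. Then the unique extension of h to [a, b] satisfying h ∘ f = f ∘ h, h(a)=a, h(b)=b is bi-Lipschitz with constant M·e^V, where V = ∫ₐᵇ |f''(s)/f'(s)| ds is the total variation of log f'. -/

import Mathlib

noncomputable def Dn9 (f : ℝ → ℝ) (n : ℕ) (t : ℝ) : ℝ := ∏ k ∈ Finset.range n, deriv f (f^[k] t)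

lemma Dn9_hasDerivAt (f : ℝ → ℝ) (hf : Differentiable ℝ f) (n : ℕ) (t : ℝ) :
    HasDerivAt (f^[n]) (Dn9 f n t) t := by
  induction n with
  | zero => simpa [Dn9] using hasDerivAt_id t
  | succ n ih =>
    rw [Function.iterate_succ']
    have h1 : HasDerivAt f (deriv f (f^[n] t)) (f^[n] t) := (hf (f^[n] t)).hasDerivAt
    have := h1.comp t ih
    simpa [Dn9, Finset.prod_range_succ, mul_comm] using this

lemma mvt9 (f : ℝ → ℝ) (hf : Differentiable ℝ f) (n : ℕ) (s t : ℝ) (hst : s ≤ t) :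
    ∃ ξ ∈ Set.Icc s t, f^[n] t - f^[n] s = Dn9 f n ξ * (t - s) := by
  rcases eq_or_lt_of_le hst with rfl | hlt
  · exact ⟨s, ⟨le_rfl, le_rfl⟩, by ring⟩
  · have hcont : ContinuousOn (f^[n]) (Set.Icc s t) :=
      fun x _ => ((Dn9_hasDerivAt f hf n x).continuousAt).continuousWithinAt
    obtain ⟨ξ, hξ, hder⟩ := exists_hasDerivAt_eq_slope (f^[n]) (Dn9 f n) hlt hcont
      (fun x _ => Dn9_hasDerivAt f hf n x)
    refine ⟨ξ, ⟨hξ.1.le, hξ.2.le⟩, ?_⟩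
    rw [hder, div_mul_eq_mul_div, mul_div_assoc, div_self (sub_ne_zero.mpr hlt.ne'), mul_one]

lemma iter_mem9 (a b : ℝ) (f : ℝ → ℝ) (hmaps : ∀ x ∈ Set.Icc a b, f x ∈ Set.Icc a b) :
    ∀ k, ∀ x ∈ Set.Icc a b, f^[k] x ∈ Set.Icc a b := by
  intro k
  induction k with
  | zero => intro x hx; simpa using hx
  | succ k ih =>
    intro x hx
    rw [Function.iterate_succ_apply]
    exact ih _ (hmaps x hx)

lemma iter_mono9 (a b : ℝ) (f : ℝ → ℝ) (hmaps : ∀ x ∈ Set.Icc a b, f x ∈ Set.Icc a b)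
    (hmono : MonotoneOn f (Set.Icc a b)) :
    ∀ k, ∀ x ∈ Set.Icc a b, ∀ y ∈ Set.Icc a b, x ≤ y → f^[k] x ≤ f^[k] y := by
  intro k
  induction k with
  | zero => intro x _ y _ hxy; simpa using hxy
  | succ k ih =>
    intro x hx y hy hxy
    rw [Function.iterate_succ_apply, Function.iterate_succ_apply]
    exact ih _ (hmaps x hx) _ (hmaps y hy) (hmono hx hy hxy)

lemma c2facts9 (f : ℝ → ℝ) (hf : ContDiff ℝ 2 f) :
    (∀ x, HasDerivAt (deriv f) (deriv (deriv f) x) x) ∧ Continuous (deriv f) ∧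
      Continuous (deriv (deriv f)) := by
  have h1 : ContDiff ℝ ((1:ℕ∞)+1) f := by norm_num at hf ⊢; exact hf
  rw [contDiff_succ_iff_deriv] at h1
  have h2 : ContDiff ℝ ((0:ℕ∞)+1) (deriv f) := by
    have := h1.2.2; norm_num at this ⊢; exact this
  rw [contDiff_succ_iff_deriv] at h2
  exact ⟨fun x => (h2.1 x).hasDerivAt, h2.1.continuous, h2.2.2.continuous⟩

lemma Gfacts9 (a b : ℝ) (f : ℝ → ℝ) (hab : a ≤ b) (hf : ContDiff ℝ 2 f)
    (hf' : ∀ x ∈ Set.Icc a b, 0 < deriv f x) :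
    ∀ u ∈ Set.Icc a b, ∀ v ∈ Set.Icc a b, u ≤ v →
      (∫ s in a..u, |deriv (deriv f) s / deriv f s|) ≤ (∫ s in a..v, |deriv (deriv f) s / deriv f s|) ∧
      |Real.log (deriv f v) - Real.log (deriv f u)| ≤
        (∫ s in a..v, |deriv (deriv f) s / deriv f s|) - (∫ s in a..u, |deriv (deriv f) s / deriv f s|) := by
  obtain ⟨hd2, hc1, hc2⟩ := c2facts9 f hf
  set ψ : ℝ → ℝ := fun s => |deriv (deriv f) s / deriv f s| with hψ
  have hψcont : ContinuousOn ψ (Set.Icc a b) := by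
    apply ContinuousOn.abs
    exact (hc2.continuousOn).div (hc1.continuousOn) (fun x hx => ne_of_gt (hf' x hx))
  have hψint : ∀ u ∈ Set.Icc a b, ∀ v ∈ Set.Icc a b, IntervalIntegrable ψ MeasureTheory.volume u v := by
    intro u hu v hv
    apply ContinuousOn.intervalIntegrable
    exact hψcont.mono (Set.uIcc_subset_Icc hu hv)
  intro u hu v hv huv
  have hamem : a ∈ Set.Icc a b := Set.left_mem_Icc.mpr hab
  have hadd : (∫ s in a..u, ψ s) + (∫ s in u..v, ψ s) = ∫ s in a..v, ψ s :=
    intervalIntegral.integral_add_adjacent_intervals (hψint a hamem u hu) (hψint u hu v hv)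
  have hnn : 0 ≤ ∫ s in u..v, ψ s :=
    intervalIntegral.integral_nonneg huv (fun x _ => abs_nonneg _)
  constructor
  · linarith
  · have heq : Real.log (deriv f v) - Real.log (deriv f u) =
        ∫ s in u..v, deriv (deriv f) s / deriv f s := by
      symm
      apply intervalIntegral.integral_eq_sub_of_hasDerivAt (f := fun y => Real.log (deriv f y))
      · intro x hx
        have hxm : x ∈ Set.Icc a b := (Set.uIcc_subset_Icc hu hv) hx
        exact (hd2 x).log (ne_of_gt (hf' x hxm))
      · apply ContinuousOn.intervalIntegrable
        exact ((hc2.continuousOn).div (hc1.continuousOn)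
          (fun x hx => ne_of_gt (hf' x hx))).mono (Set.uIcc_subset_Icc hu hv)
    rw [heq]
    have := intervalIntegral.abs_integral_le_integral_abs
      (f := fun s => deriv (deriv f) s / deriv f s) (μ := MeasureTheory.volume) huv
    calc |∫ s in u..v, deriv (deriv f) s / deriv f s| ≤ ∫ s in u..v, ψ s := this
      _ = (∫ s in a..v, ψ s) - (∫ s in a..u, ψ s) := by linarith

lemma Dn9_pos (a b : ℝ) (f : ℝ → ℝ) (hf' : ∀ x ∈ Set.Icc a b, 0 < deriv f x)
    (hmaps : ∀ x ∈ Set.Icc a b, f x ∈ Set.Icc a b) (n : ℕ) (t : ℝ) (ht : t ∈ Set.Icc a b) :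
    0 < Dn9 f n t :=
  Finset.prod_pos fun k _ => hf' _ (iter_mem9 a b f hmaps k t ht)

lemma distortion9 (a b V : ℝ) (f : ℝ → ℝ) (hf : ContDiff ℝ 2 f)
    (hf' : ∀ x ∈ Set.Icc a b, 0 < deriv f x)
    (hmaps : ∀ x ∈ Set.Icc a b, f x ∈ Set.Icc a b)
    (hmono : MonotoneOn f (Set.Icc a b))
    (hV : V = ∫ s in a..b, |deriv (deriv f) s / deriv f s|)
    (p q : ℝ) (hap : a ≤ p) (hqb : q ≤ b) (hpq : p ≤ q) (hfq : f q ≤ p)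
    (n : ℕ) (ξ : ℝ) (hξ : ξ ∈ Set.Icc p q) (η : ℝ) (hη : η ∈ Set.Icc p q) :
    Dn9 f n ξ ≤ Real.exp V * Dn9 f n η := by
  have hsub : Set.Icc p q ⊆ Set.Icc a b := Set.Icc_subset_Icc hap hqb
  have hab : a ≤ b := le_trans hap (le_trans hpq hqb)
  have hξab : ξ ∈ Set.Icc a b := hsub hξ
  have hηab : η ∈ Set.Icc a b := hsub hη
  set G : ℝ → ℝ := fun x => ∫ s in a..x, |deriv (deriv f) s / deriv f s| with hG
  have hGfacts := Gfacts9 a b f hab hf hf'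
  have hposξ : ∀ k ∈ Finset.range n, 0 < deriv f (f^[k] ξ) :=
    fun k _ => hf' _ (iter_mem9 a b f hmaps k ξ hξab)
  have hposη : ∀ k ∈ Finset.range n, 0 < deriv f (f^[k] η) :=
    fun k _ => hf' _ (iter_mem9 a b f hmaps k η hηab)
  have hDξ : 0 < Dn9 f n ξ := Finset.prod_pos hposξ
  have hDη : 0 < Dn9 f n η := Finset.prod_pos hposη
  have hlogξ : Real.log (Dn9 f n ξ) = ∑ k ∈ Finset.range n, Real.log (deriv f (f^[k] ξ)) :=
    Real.log_prod (fun k hk => ne_of_gt (hposξ k hk))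
  have hlogη : Real.log (Dn9 f n η) = ∑ k ∈ Finset.range n, Real.log (deriv f (f^[k] η)) :=
    Real.log_prod (fun k hk => ne_of_gt (hposη k hk))
  have hterm : ∀ k, Real.log (deriv f (f^[k] ξ)) - Real.log (deriv f (f^[k] η)) ≤
      G (f^[k] q) - G (f^[k+1] q) := by
    intro k
    have hpm : p ∈ Set.Icc a b := ⟨hap, le_trans hpq hqb⟩
    have hqm : q ∈ Set.Icc a b := ⟨le_trans hap hpq, hqb⟩
    have hkp : f^[k] p ∈ Set.Icc a b := iter_mem9 a b f hmaps k p hpm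
    have hkq : f^[k] q ∈ Set.Icc a b := iter_mem9 a b f hmaps k q hqm
    have hkξ : f^[k] ξ ∈ Set.Icc a b := iter_mem9 a b f hmaps k ξ hξab
    have hkη : f^[k] η ∈ Set.Icc a b := iter_mem9 a b f hmaps k η hηab
    have h1 : f^[k] p ≤ f^[k] ξ := iter_mono9 a b f hmaps hmono k p hpm ξ hξab hξ.1
    have h2 : f^[k] ξ ≤ f^[k] q := iter_mono9 a b f hmaps hmono k ξ hξab q hqm hξ.2
    have h3 : f^[k] p ≤ f^[k] η := iter_mono9 a b f hmaps hmono k p hpm η hηab hη.1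
    have h4 : f^[k] η ≤ f^[k] q := iter_mono9 a b f hmaps hmono k η hηab q hqm hη.2
    have h5 : f^[k+1] q ≤ f^[k] p := by
      rw [Function.iterate_succ_apply]
      exact iter_mono9 a b f hmaps hmono k (f q) (hmaps q hqm) p hpm hfq
    have hk1q : f^[k+1] q ∈ Set.Icc a b := iter_mem9 a b f hmaps (k+1) q hqm
    have hGpk : G (f^[k+1] q) ≤ G (f^[k] p) := (hGfacts _ hk1q _ hkp h5).1
    have hmain : |Real.log (deriv f (f^[k] ξ)) - Real.log (deriv f (f^[k] η))| ≤
        G (f^[k] q) - G (f^[k] p) := by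
      rcases le_total (f^[k] ξ) (f^[k] η) with hle | hle
      · have := (hGfacts _ hkξ _ hkη hle).2
        have g1 : G (f^[k] p) ≤ G (f^[k] ξ) := (hGfacts _ hkp _ hkξ h1).1
        have g2 : G (f^[k] η) ≤ G (f^[k] q) := (hGfacts _ hkη _ hkq h4).1
        rw [abs_sub_comm]
        calc |Real.log (deriv f (f^[k] η)) - Real.log (deriv f (f^[k] ξ))|
            ≤ G (f^[k] η) - G (f^[k] ξ) := this
          _ ≤ G (f^[k] q) - G (f^[k] p) := by linarith
      · have := (hGfacts _ hkη _ hkξ hle).2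
        have g1 : G (f^[k] p) ≤ G (f^[k] η) := (hGfacts _ hkp _ hkη h3).1
        have g2 : G (f^[k] ξ) ≤ G (f^[k] q) := (hGfacts _ hkξ _ hkq h2).1
        calc |Real.log (deriv f (f^[k] ξ)) - Real.log (deriv f (f^[k] η))|
            ≤ G (f^[k] ξ) - G (f^[k] η) := this
          _ ≤ G (f^[k] q) - G (f^[k] p) := by linarith
    have := le_trans (le_abs_self _) hmain
    linarith
  have hqm : q ∈ Set.Icc a b := ⟨le_trans hap hpq, hqb⟩
  have hsum : Real.log (Dn9 f n ξ) - Real.log (Dn9 f n η) ≤ V := by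
    rw [hlogξ, hlogη, ← Finset.sum_sub_distrib]
    have h1 : ∑ k ∈ Finset.range n,
        (Real.log (deriv f (f^[k] ξ)) - Real.log (deriv f (f^[k] η))) ≤
        ∑ k ∈ Finset.range n, (G (f^[k] q) - G (f^[k+1] q)) :=
      Finset.sum_le_sum fun k _ => hterm k
    have h2 : ∑ k ∈ Finset.range n, (G (f^[k] q) - G (f^[k+1] q)) =
        G (f^[0] q) - G (f^[n] q) := Finset.sum_range_sub' (fun k => G (f^[k] q)) n
    have hGa : G a = 0 := intervalIntegral.integral_same
    have hGnq : G a ≤ G (f^[n] q) :=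
      (hGfacts a (Set.left_mem_Icc.mpr hab) _ (iter_mem9 a b f hmaps n q hqm)
        (iter_mem9 a b f hmaps n q hqm).1).1
    have hGqb : G q ≤ G b := (hGfacts q hqm b (Set.right_mem_Icc.mpr hab) hqm.2).1
    have hGbV : G b = V := hV.symm
    simp only [Function.iterate_zero_apply] at h2
    linarith [h1, h2.le, h2.ge]
  calc Dn9 f n ξ = Real.exp (Real.log (Dn9 f n ξ)) := (Real.exp_log hDξ).symm
    _ ≤ Real.exp (V + Real.log (Dn9 f n η)) := by
        apply Real.exp_le_exp.mpr; linarith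
    _ = Real.exp V * Dn9 f n η := by rw [Real.exp_add, Real.exp_log hDη]
theorem stmt9 (a b c : ℝ) (hab : a < b) (hc : c ∈ Set.Ioo a b)
    (f : ℝ → ℝ) (hf : ContDiff ℝ 2 f)
    (hfa : f a = a) (hfb : f b = b)
    (hf_mono : StrictMonoOn f (Set.Icc a b))
    (hf_surj : f '' Set.Icc a b = Set.Icc a b)
    (hf' : ∀ x ∈ Set.Icc a b, 0 < deriv f x)
    (hcontract : ∀ x ∈ Set.Ioo a b, f x < x)
    (M : ℝ) (hM : 1 ≤ M)
    (h : ℝ → ℝ)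
    (hh_cont : ContinuousOn h (Set.Icc (f c) c))
    (hh_mono : StrictMonoOn h (Set.Icc (f c) c))
    (hh_end : h (f c) = f c ∧ h c = c)
    (hh_surj : h '' Set.Icc (f c) c = Set.Icc (f c) c)
    (hh_bilip : ∀ x ∈ Set.Icc (f c) c, ∀ y ∈ Set.Icc (f c) c,
      M⁻¹ * |x - y| ≤ |h x - h y| ∧ |h x - h y| ≤ M * |x - y|)
    (H : ℝ → ℝ)
    (hH_cont : ContinuousOn H (Set.Icc a b))
    (hH_mono : StrictMonoOn H (Set.Icc a b))
    (hH_agree : ∀ x ∈ Set.Icc (f c) c, H x = h x)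
    (hH_comm : ∀ x ∈ Set.Icc a b, H (f x) = f (H x))
    (hHa : H a = a) (hHb : H b = b)
    (V : ℝ) (hV : V = ∫ s in a..b, |deriv (deriv f) s / deriv f s|) :
    ∀ x ∈ Set.Icc a b, ∀ y ∈ Set.Icc a b,
      (M * Real.exp V)⁻¹ * |x - y| ≤ |H x - H y| ∧
        |H x - H y| ≤ M * Real.exp V * |x - y| := by
  have hab' : a ≤ b := hab.le
  have hfdiff : Differentiable ℝ f := hf.differentiable (by norm_num)
  have fmaps : ∀ z ∈ Set.Icc a b, f z ∈ Set.Icc a b := by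
    intro z hz; rw [← hf_surj]; exact ⟨z, hz, rfl⟩
  have fmono : MonotoneOn f (Set.Icc a b) := hf_mono.monotoneOn
  have hcm : c ∈ Set.Icc a b := ⟨hc.1.le, hc.2.le⟩
  have hfIoo : ∀ z ∈ Set.Ioo a b, f z ∈ Set.Ioo a b := by
    intro z hz
    constructor
    · have := hf_mono (Set.left_mem_Icc.mpr hab') ⟨hz.1.le, hz.2.le⟩ hz.1
      rwa [hfa] at this
    · exact lt_trans (hcontract z hz) hz.2
  have hfc_lt : f c < c := hcontract c hc
  have hI0sub : Set.Icc (f c) c ⊆ Set.Icc a b :=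
    Set.Icc_subset_Icc (hfIoo c hc).1.le hc.2.le
  -- inverse g
  have hgex : ∀ y : ℝ, ∃ x, y ∈ Set.Icc a b → (x ∈ Set.Icc a b ∧ f x = y) := by
    intro y
    by_cases hy : y ∈ Set.Icc a b
    · have hy' := hy; rw [← hf_surj] at hy'
      obtain ⟨x, hx, hfx⟩ := hy'
      exact ⟨x, fun _ => ⟨hx, hfx⟩⟩
    · exact ⟨0, fun hmem => absurd hmem hy⟩
  choose g hg using hgex
  have hgmem : ∀ y ∈ Set.Icc a b, g y ∈ Set.Icc a b := fun y hy => (hg y hy).1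
  have hfg : ∀ y ∈ Set.Icc a b, f (g y) = y := fun y hy => (hg y hy).2
  have hgf : ∀ z ∈ Set.Icc a b, g (f z) = z := by
    intro z hz
    exact hf_mono.injOn (hgmem _ (fmaps z hz)) hz (hfg _ (fmaps z hz))
  have hgIoo : ∀ z ∈ Set.Ioo a b, g z ∈ Set.Ioo a b ∧ z < g z := by
    intro z hz
    have hzm : z ∈ Set.Icc a b := ⟨hz.1.le, hz.2.le⟩
    have h1 : g z ∈ Set.Icc a b := hgmem z hzm
    have hna : g z ≠ a := by
      intro hgz
      have := hfg z hzm
      rw [hgz, hfa] at this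
      exact absurd this.symm (ne_of_gt hz.1)
    have hnb : g z ≠ b := by
      intro hgz
      have := hfg z hzm
      rw [hgz, hfb] at this
      exact absurd this.symm (ne_of_lt hz.2)
    have hgIoo' : g z ∈ Set.Ioo a b :=
      ⟨lt_of_le_of_ne h1.1 (Ne.symm hna), lt_of_le_of_ne h1.2 hnb⟩
    refine ⟨hgIoo', ?_⟩
    have := hcontract _ hgIoo'
    rwa [hfg z hzm] at this
  have hgmono : ∀ u ∈ Set.Icc a b, ∀ v ∈ Set.Icc a b, u ≤ v → g u ≤ g v := by
    intro u hu v hv huv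
    by_contra hlt
    push_neg at hlt
    have := hf_mono (hgmem v hv) (hgmem u hu) hlt
    rw [hfg u hu, hfg v hv] at this
    exact absurd this (not_lt.mpr huv)
  -- orbits
  have hcPIoo : ∀ n, f^[n] c ∈ Set.Ioo a b := by
    intro n
    induction n with
    | zero => simpa using hc
    | succ n ih => rw [Function.iterate_succ_apply']; exact hfIoo _ ih
  have hcPmem : ∀ n, f^[n] c ∈ Set.Icc a b := fun n => ⟨(hcPIoo n).1.le, (hcPIoo n).2.le⟩
  have hcPdec : ∀ n, f^[n+1] c < f^[n] c := by
    intro n; rw [Function.iterate_succ_apply']; exact hcontract _ (hcPIoo n)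
  have hcNIoo : ∀ n, g^[n] c ∈ Set.Ioo a b := by
    intro n
    induction n with
    | zero => simpa using hc
    | succ n ih => rw [Function.iterate_succ_apply']; exact (hgIoo _ ih).1
  have hcNmem : ∀ n, g^[n] c ∈ Set.Icc a b := fun n => ⟨(hcNIoo n).1.le, (hcNIoo n).2.le⟩
  have hcNinc : ∀ n, g^[n] c < g^[n+1] c := by
    intro n; rw [Function.iterate_succ_apply']; exact (hgIoo _ (hcNIoo n)).2
  have hfcN : ∀ n, f (g^[n+1] c) = g^[n] c := by
    intro n; rw [Function.iterate_succ_apply']; exact hfg _ (hcNmem n)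
  have hcPanti : Antitone (fun n => f^[n] c) := antitone_nat_of_succ_le fun n => (hcPdec n).le
  have hcNmono : Monotone (fun n => g^[n] c) := monotone_nat_of_le_succ fun n => (hcNinc n).le
  have hcPle_c : ∀ n, f^[n] c ≤ c := fun n => hcPanti (Nat.zero_le n)
  have hcle_cN : ∀ n, c ≤ g^[n] c := fun n => hcNmono (Nat.zero_le n)
  -- limits
  have hcPlim : Filter.Tendsto (fun n => f^[n] c) Filter.atTop (nhds a) := by
    have hbdd : BddBelow (Set.range fun n => f^[n] c) := by
      refine ⟨a, ?_⟩
      rintro z ⟨n, rfl⟩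
      exact (hcPmem n).1
    have htend := tendsto_atTop_ciInf hcPanti hbdd
    set L := ⨅ n, f^[n] c with hL
    have hLa : a ≤ L := le_ciInf fun n => (hcPmem n).1
    have hLc : L ≤ c := by simpa using ciInf_le hbdd 0
    have hLm : L ∈ Set.Icc a b := ⟨hLa, le_trans hLc hc.2.le⟩
    have hfL : f L = L := by
      have h1 : Filter.Tendsto (fun n => f (f^[n] c)) Filter.atTop (nhds (f L)) :=
        (hf.continuous.tendsto L).comp htend
      have h2 : (fun n => f (f^[n] c)) = fun n => f^[n+1] c :=
        funext fun n => (Function.iterate_succ_apply' f n c).symm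
      have h3 : Filter.Tendsto (fun n => f^[n+1] c) Filter.atTop (nhds L) :=
        htend.comp (Filter.tendsto_add_atTop_nat 1)
      rw [h2] at h1
      exact tendsto_nhds_unique h1 h3
    have : L = a := by
      by_contra hne
      have hLIoo : L ∈ Set.Ioo a b :=
        ⟨lt_of_le_of_ne hLa (Ne.symm hne), lt_of_le_of_lt hLc hc.2⟩
      exact absurd hfL (ne_of_lt (hcontract L hLIoo))
    rwa [this] at htend
  have hcNlim : Filter.Tendsto (fun n => g^[n] c) Filter.atTop (nhds b) := by
    have hbdd : BddAbove (Set.range fun n => g^[n] c) := by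
      refine ⟨b, ?_⟩
      rintro z ⟨n, rfl⟩
      exact (hcNmem n).2
    have htend := tendsto_atTop_ciSup hcNmono hbdd
    set L := ⨆ n, g^[n] c with hL
    have hLb : L ≤ b := ciSup_le fun n => (hcNmem n).2
    have hcL : c ≤ L := by simpa using le_ciSup hbdd 0
    have hfL : f L = L := by
      have h1 : Filter.Tendsto (fun n => f (g^[n+1] c)) Filter.atTop (nhds (f L)) :=
        (hf.continuous.tendsto L).comp (htend.comp (Filter.tendsto_add_atTop_nat 1))
      have h2 : (fun n => f (g^[n+1] c)) = fun n => g^[n] c := funext fun n => hfcN n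
      rw [h2] at h1
      exact tendsto_nhds_unique h1 htend
    have : L = b := by
      by_contra hne
      have hLIoo : L ∈ Set.Ioo a b :=
        ⟨lt_of_lt_of_le hc.1 hcL, lt_of_le_of_ne hLb hne⟩
      exact absurd hfL (ne_of_lt (hcontract L hLIoo))
    rwa [this] at htend
  -- H facts
  have HmonoOn : MonotoneOn H (Set.Icc a b) := hH_mono.monotoneOn
  have Hmaps : ∀ z ∈ Set.Icc a b, H z ∈ Set.Icc a b := by
    intro z hz
    constructor
    · rw [← hHa]; exact HmonoOn (Set.left_mem_Icc.mpr hab') hz hz.1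
    · rw [← hHb]; exact HmonoOn hz (Set.right_mem_Icc.mpr hab') hz.2
  have Hcomm_iter : ∀ n, ∀ z ∈ Set.Icc a b, H (f^[n] z) = f^[n] (H z) := by
    intro n
    induction n with
    | zero => intro z _; simp
    | succ n ih =>
      intro z hz
      rw [Function.iterate_succ_apply', Function.iterate_succ_apply',
        hH_comm _ (iter_mem9 a b f fmaps n z hz), ih z hz]
  have Hc : H c = c := by
    rw [hH_agree c ⟨hfc_lt.le, le_rfl⟩]; exact hh_end.2
  have HcP : ∀ n, H (f^[n] c) = f^[n] c := by
    intro n; rw [Hcomm_iter n c hcm, Hc]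
  have HcN : ∀ n, H (g^[n] c) = g^[n] c := by
    intro n
    induction n with
    | zero => simpa using Hc
    | succ n ih =>
      have hz : g^[n+1] c ∈ Set.Icc a b := hcNmem (n+1)
      have h1 : f (H (g^[n+1] c)) = f (g^[n+1] c) := by
        rw [← hH_comm _ hz, hfcN n]; exact ih
      exact hf_mono.injOn (Hmaps _ hz) hz h1
  -- tile structure
  have tileP : ∀ m, ∀ x ∈ Set.Icc (f^[m+1] c) (f^[m] c),
      g^[m] x ∈ Set.Icc (f c) c ∧ f^[m] (g^[m] x) = x := by
    intro m
    induction m with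
    | zero => intro x hx; simpa using hx
    | succ m ih =>
      intro x hx
      have hxm : x ∈ Set.Icc a b :=
        ⟨le_trans (hcPmem (m+2)).1 hx.1, le_trans hx.2 (hcPmem (m+1)).2⟩
      have hg1 : f^[m+1] c ≤ g x := by
        have : g (f^[m+2] c) ≤ g x := by
          apply hgmono _ (hcPmem (m+2)) _ hxm hx.1
        rwa [show f^[m+2] c = f (f^[m+1] c) from Function.iterate_succ_apply' f (m+1) c,
          hgf _ (hcPmem (m+1))] at this
      have hg2 : g x ≤ f^[m] c := by
        have : g x ≤ g (f^[m+1] c) := hgmono _ hxm _ (hcPmem (m+1)) hx.2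
        rwa [show f^[m+1] c = f (f^[m] c) from Function.iterate_succ_apply' f m c,
          hgf _ (hcPmem m)] at this
      obtain ⟨hI, hE⟩ := ih (g x) ⟨hg1, hg2⟩
      constructor
      · rwa [Function.iterate_succ_apply]
      · rw [Function.iterate_succ_apply g, Function.iterate_succ_apply' f, hE, hfg x hxm]
  have tileN : ∀ m, ∀ x ∈ Set.Icc (g^[m] c) (g^[m+1] c), f^[m+1] x ∈ Set.Icc (f c) c := by
    intro m
    induction m with
    | zero =>
      intro x hx
      have hx1 : c ≤ x := by simpa using hx.1
      have hx2 : x ≤ g c := by simpa using hx.2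
      have hxm : x ∈ Set.Icc a b := ⟨le_trans hc.1.le hx1, le_trans hx2 (hgmem c hcm).2⟩
      rw [Function.iterate_succ_apply', Function.iterate_zero_apply]
      constructor
      · exact fmono hcm hxm hx1
      · have := fmono hxm (hgmem c hcm) hx2
        rwa [hfg c hcm] at this
    | succ m ih =>
      intro x hx
      have hxm : x ∈ Set.Icc a b :=
        ⟨le_trans (hcNmem (m+1)).1 hx.1, le_trans hx.2 (hcNmem (m+2)).2⟩
      have hf1 : g^[m] c ≤ f x := by
        have := fmono (hcNmem (m+1)) hxm hx.1
        rwa [hfcN m] at this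
      have hf2 : f x ≤ g^[m+1] c := by
        have := fmono hxm (hcNmem (m+2)) hx.2
        rwa [hfcN (m+1)] at this
      rw [show (m+1+1 : ℕ) = m+1+1 from rfl, Function.iterate_succ_apply]
      exact ih (f x) ⟨hf1, hf2⟩
  have hbilip' : ∀ u ∈ Set.Icc (f c) c, ∀ v ∈ Set.Icc (f c) c, u ≤ v →
      M⁻¹ * (v - u) ≤ h v - h u ∧ h v - h u ≤ M * (v - u) := by
    intro u hu v hv huv
    have hm : h u ≤ h v := hh_mono.monotoneOn hu hv huv
    have := hh_bilip v hv u hu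
    rwa [abs_of_nonneg (sub_nonneg.mpr huv), abs_of_nonneg (sub_nonneg.mpr hm)] at this
  have hM0 : (0:ℝ) < M := lt_of_lt_of_le one_pos hM
  have hE0 : 0 < Real.exp V := Real.exp_pos V
  have hK0 : 0 < M * Real.exp V := mul_pos hM0 hE0
  have hafc : a ≤ f c := (hfIoo c hc).1.le
  have tilePbound : ∀ m, ∀ x ∈ Set.Icc (f^[m+1] c) (f^[m] c), ∀ y ∈ Set.Icc (f^[m+1] c) (f^[m] c),
      x ≤ y → (M * Real.exp V)⁻¹ * (y - x) ≤ H y - H x ∧ H y - H x ≤ M * Real.exp V * (y - x) := by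
    intro m x hx y hy hxy
    obtain ⟨huI, hfu⟩ := tileP m x hx
    obtain ⟨hvI, hfv⟩ := tileP m y hy
    set u := g^[m] x with hu_def
    set v := g^[m] y with hv_def
    have huab : u ∈ Set.Icc a b := hI0sub huI
    have hvab : v ∈ Set.Icc a b := hI0sub hvI
    have huv : u ≤ v := by
      by_contra hlt
      push_neg at hlt
      have h1 : f^[m] v ≤ f^[m] u := iter_mono9 a b f fmaps fmono m v hvab u huab hlt.le
      rw [hfu, hfv] at h1
      have hxe : x = y := le_antisymm hxy h1
      have huve : u = v := by rw [hu_def, hv_def, hxe]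
      rw [huve] at hlt
      exact lt_irrefl _ hlt
    have hhu : h u ∈ Set.Icc (f c) c := by rw [← hh_surj]; exact ⟨u, huI, rfl⟩
    have hhv : h v ∈ Set.Icc (f c) c := by rw [← hh_surj]; exact ⟨v, hvI, rfl⟩
    have hhm : h u ≤ h v := hh_mono.monotoneOn huI hvI huv
    have HX : H x = f^[m] (h u) := by
      rw [← hfu, Hcomm_iter m u huab, hH_agree u huI]
    have HY : H y = f^[m] (h v) := by
      rw [← hfv, Hcomm_iter m v hvab, hH_agree v hvI]
    obtain ⟨η, hηm, hηe⟩ := mvt9 f hfdiff m u v huv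
    obtain ⟨ξ, hξm, hξe⟩ := mvt9 f hfdiff m (h u) (h v) hhm
    have hηI : η ∈ Set.Icc (f c) c := ⟨le_trans huI.1 hηm.1, le_trans hηm.2 hvI.2⟩
    have hξI : ξ ∈ Set.Icc (f c) c := ⟨le_trans hhu.1 hξm.1, le_trans hξm.2 hhv.2⟩
    have d1 : Dn9 f m ξ ≤ Real.exp V * Dn9 f m η :=
      distortion9 a b V f hf hf' fmaps fmono hV (f c) c hafc hc.2.le hfc_lt.le le_rfl m ξ hξI η hηI
    have d2 : Dn9 f m η ≤ Real.exp V * Dn9 f m ξ :=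
      distortion9 a b V f hf hf' fmaps fmono hV (f c) c hafc hc.2.le hfc_lt.le le_rfl m η hηI ξ hξI
    have hDξ : 0 < Dn9 f m ξ := Dn9_pos a b f hf' fmaps m ξ (hI0sub hξI)
    have hDη : 0 < Dn9 f m η := Dn9_pos a b f hf' fmaps m η (hI0sub hηI)
    obtain ⟨b1, b2⟩ := hbilip' u huI v hvI huv
    have yx : y - x = Dn9 f m η * (v - u) := by
      rw [← hfu, ← hfv]; exact hηe
    have HYX : H y - H x = Dn9 f m ξ * (h v - h u) := by rw [HX, HY]; exact hξe
    have hvu0 : 0 ≤ v - u := sub_nonneg.mpr huv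
    have hhd0 : 0 ≤ h v - h u := sub_nonneg.mpr hhm
    constructor
    · have s1 : v - u ≤ M * (h v - h u) := by
        have := mul_le_mul_of_nonneg_left b1 hM0.le
        rwa [← mul_assoc, mul_inv_cancel₀ hM0.ne', one_mul] at this
      have k2 : y - x ≤ M * Real.exp V * (H y - H x) := by
        calc y - x = Dn9 f m η * (v - u) := yx
          _ ≤ (Real.exp V * Dn9 f m ξ) * (v - u) := mul_le_mul_of_nonneg_right d2 hvu0
          _ ≤ (Real.exp V * Dn9 f m ξ) * (M * (h v - h u)) :=
              mul_le_mul_of_nonneg_left s1 (by positivity)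
          _ = M * Real.exp V * (Dn9 f m ξ * (h v - h u)) := by ring
          _ = M * Real.exp V * (H y - H x) := by rw [← HYX]
      have := mul_le_mul_of_nonneg_left k2 (inv_nonneg.mpr hK0.le)
      rwa [inv_mul_cancel_left₀ hK0.ne'] at this
    · calc H y - H x = Dn9 f m ξ * (h v - h u) := HYX
        _ ≤ Dn9 f m ξ * (M * (v - u)) := mul_le_mul_of_nonneg_left b2 hDξ.le
        _ ≤ (Real.exp V * Dn9 f m η) * (M * (v - u)) :=
            mul_le_mul_of_nonneg_right d1 (by positivity)
        _ = M * Real.exp V * (Dn9 f m η * (v - u)) := by ring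
        _ = M * Real.exp V * (y - x) := by rw [← yx]
  have tileNbound : ∀ m, ∀ x ∈ Set.Icc (g^[m] c) (g^[m+1] c), ∀ y ∈ Set.Icc (g^[m] c) (g^[m+1] c),
      x ≤ y → (M * Real.exp V)⁻¹ * (y - x) ≤ H y - H x ∧ H y - H x ≤ M * Real.exp V * (y - x) := by
    intro m x hx y hy hxy
    have hpab := hcNmem m
    have hqab := hcNmem (m+1)
    have hxab : x ∈ Set.Icc a b := ⟨le_trans hpab.1 hx.1, le_trans hx.2 hqab.2⟩
    have hyab : y ∈ Set.Icc a b := ⟨le_trans hpab.1 hy.1, le_trans hy.2 hqab.2⟩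
    have hfxI : f^[m+1] x ∈ Set.Icc (f c) c := tileN m x hx
    have hfyI : f^[m+1] y ∈ Set.Icc (f c) c := tileN m y hy
    have hfxy : f^[m+1] x ≤ f^[m+1] y := iter_mono9 a b f fmaps fmono (m+1) x hxab y hyab hxy
    have Hx_tile : H x ∈ Set.Icc (g^[m] c) (g^[m+1] c) := by
      constructor
      · rw [← HcN m]; exact HmonoOn hpab hxab hx.1
      · rw [← HcN (m+1)]; exact HmonoOn hxab hqab hx.2
    have Hy_tile : H y ∈ Set.Icc (g^[m] c) (g^[m+1] c) := by
      constructor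
      · rw [← HcN m]; exact HmonoOn hpab hyab hy.1
      · rw [← HcN (m+1)]; exact HmonoOn hyab hqab hy.2
    have Hxy : H x ≤ H y := HmonoOn hxab hyab hxy
    have HfX : f^[m+1] (H x) = h (f^[m+1] x) := by
      rw [← Hcomm_iter (m+1) x hxab, hH_agree _ hfxI]
    have HfY : f^[m+1] (H y) = h (f^[m+1] y) := by
      rw [← Hcomm_iter (m+1) y hyab, hH_agree _ hfyI]
    obtain ⟨η, hηm, hηe⟩ := mvt9 f hfdiff (m+1) x y hxy
    obtain ⟨ξ, hξm, hξe⟩ := mvt9 f hfdiff (m+1) (H x) (H y) Hxy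
    have hηT : η ∈ Set.Icc (g^[m] c) (g^[m+1] c) := ⟨le_trans hx.1 hηm.1, le_trans hηm.2 hy.2⟩
    have hξT : ξ ∈ Set.Icc (g^[m] c) (g^[m+1] c) :=
      ⟨le_trans Hx_tile.1 hξm.1, le_trans hξm.2 Hy_tile.2⟩
    have d1 : Dn9 f (m+1) ξ ≤ Real.exp V * Dn9 f (m+1) η :=
      distortion9 a b V f hf hf' fmaps fmono hV (g^[m] c) (g^[m+1] c) hpab.1 hqab.2
        (hcNinc m).le (hfcN m).le (m+1) ξ hξT η hηT
    have d2 : Dn9 f (m+1) η ≤ Real.exp V * Dn9 f (m+1) ξ :=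
      distortion9 a b V f hf hf' fmaps fmono hV (g^[m] c) (g^[m+1] c) hpab.1 hqab.2
        (hcNinc m).le (hfcN m).le (m+1) η hηT ξ hξT
    have hDξ : 0 < Dn9 f (m+1) ξ :=
      Dn9_pos a b f hf' fmaps (m+1) ξ ⟨le_trans hpab.1 hξT.1, le_trans hξT.2 hqab.2⟩
    have hDη : 0 < Dn9 f (m+1) η :=
      Dn9_pos a b f hf' fmaps (m+1) η ⟨le_trans hpab.1 hηT.1, le_trans hηT.2 hqab.2⟩
    obtain ⟨b1, b2⟩ := hbilip' _ hfxI _ hfyI hfxy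
    have e1 : Dn9 f (m+1) ξ * (H y - H x) = h (f^[m+1] y) - h (f^[m+1] x) := by
      rw [← HfX, ← HfY]; exact hξe.symm
    have e2 : f^[m+1] y - f^[m+1] x = Dn9 f (m+1) η * (y - x) := hηe
    have hyx0 : 0 ≤ y - x := sub_nonneg.mpr hxy
    have hH0 : 0 ≤ H y - H x := sub_nonneg.mpr Hxy
    constructor
    · have k2 : Dn9 f (m+1) η * (y - x) ≤ Dn9 f (m+1) η * (M * Real.exp V * (H y - H x)) := by
        calc Dn9 f (m+1) η * (y - x) = f^[m+1] y - f^[m+1] x := e2.symm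
          _ ≤ M * (h (f^[m+1] y) - h (f^[m+1] x)) := by
              have := mul_le_mul_of_nonneg_left b1 hM0.le
              rwa [← mul_assoc, mul_inv_cancel₀ hM0.ne', one_mul] at this
          _ = M * (Dn9 f (m+1) ξ * (H y - H x)) := by rw [e1]
          _ ≤ M * ((Real.exp V * Dn9 f (m+1) η) * (H y - H x)) :=
              mul_le_mul_of_nonneg_left (mul_le_mul_of_nonneg_right d1 hH0) hM0.le
          _ = Dn9 f (m+1) η * (M * Real.exp V * (H y - H x)) := by ring
      have k3 : y - x ≤ M * Real.exp V * (H y - H x) := le_of_mul_le_mul_left k2 hDη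
      have := mul_le_mul_of_nonneg_left k3 (inv_nonneg.mpr hK0.le)
      rwa [inv_mul_cancel_left₀ hK0.ne'] at this
    · have k2 : Dn9 f (m+1) ξ * (H y - H x) ≤ Dn9 f (m+1) ξ * (M * Real.exp V * (y - x)) := by
        calc Dn9 f (m+1) ξ * (H y - H x) = h (f^[m+1] y) - h (f^[m+1] x) := e1
          _ ≤ M * (f^[m+1] y - f^[m+1] x) := b2
          _ = M * (Dn9 f (m+1) η * (y - x)) := by rw [e2]
          _ ≤ M * ((Real.exp V * Dn9 f (m+1) ξ) * (y - x)) :=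
              mul_le_mul_of_nonneg_left (mul_le_mul_of_nonneg_right d2 hyx0) hM0.le
          _ = Dn9 f (m+1) ξ * (M * Real.exp V * (y - x)) := by ring
      exact le_of_mul_le_mul_left k2 hDξ
  have glue : ∀ p q r : ℝ, p ≤ q → q ≤ r →
      (∀ x ∈ Set.Icc p q, ∀ y ∈ Set.Icc p q, x ≤ y →
        (M * Real.exp V)⁻¹ * (y - x) ≤ H y - H x ∧ H y - H x ≤ M * Real.exp V * (y - x)) →
      (∀ x ∈ Set.Icc q r, ∀ y ∈ Set.Icc q r, x ≤ y →
        (M * Real.exp V)⁻¹ * (y - x) ≤ H y - H x ∧ H y - H x ≤ M * Real.exp V * (y - x)) →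
      (∀ x ∈ Set.Icc p r, ∀ y ∈ Set.Icc p r, x ≤ y →
        (M * Real.exp V)⁻¹ * (y - x) ≤ H y - H x ∧ H y - H x ≤ M * Real.exp V * (y - x)) := by
    intro p q r hpq hqr h1 h2 x hx y hy hxy
    rcases le_total y q with hyq | hqy
    · exact h1 x ⟨hx.1, le_trans hxy hyq⟩ y ⟨le_trans hx.1 hxy, hyq⟩ hxy
    · rcases le_total q x with hqx | hxq
      · exact h2 x ⟨hqx, le_trans hxy hy.2⟩ y ⟨le_trans hqx hxy, hy.2⟩ hxy
      · have ha1 := h1 x ⟨hx.1, hxq⟩ q ⟨hpq, le_rfl⟩ hxq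
        have ha2 := h2 q ⟨le_rfl, hqr⟩ y ⟨hqy, hy.2⟩ hqy
        constructor
        · calc (M * Real.exp V)⁻¹ * (y - x)
              = (M * Real.exp V)⁻¹ * (q - x) + (M * Real.exp V)⁻¹ * (y - q) := by ring
            _ ≤ (H q - H x) + (H y - H q) := add_le_add ha1.1 ha2.1
            _ = H y - H x := by ring
        · calc H y - H x = (H q - H x) + (H y - H q) := by ring
            _ ≤ M * Real.exp V * (q - x) + M * Real.exp V * (y - q) := add_le_add ha1.2 ha2.2
            _ = M * Real.exp V * (y - x) := by ring
  have mainN : ∀ N : ℕ, ∀ x ∈ Set.Icc (f^[N] c) (g^[N] c), ∀ y ∈ Set.Icc (f^[N] c) (g^[N] c),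
      x ≤ y → (M * Real.exp V)⁻¹ * (y - x) ≤ H y - H x ∧ H y - H x ≤ M * Real.exp V * (y - x) := by
    intro N
    induction N with
    | zero =>
      intro x hx y hy hxy
      simp only [Function.iterate_zero_apply] at hx hy
      have hx' : x = c := le_antisymm hx.2 hx.1
      have hy' : y = c := le_antisymm hy.2 hy.1
      rw [hx', hy']
      simp
    | succ N ih =>
      have hmid : f^[N] c ≤ g^[N] c := le_trans (hcPle_c N) (hcle_cN N)
      have g1 := glue (f^[N] c) (g^[N] c) (g^[N+1] c) hmid (hcNinc N).le ih (tileNbound N)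
      exact glue (f^[N+1] c) (f^[N] c) (g^[N+1] c) (hcPdec N).le
        (le_trans hmid (hcNinc N).le) (tilePbound N) g1
  have ordered : ∀ x ∈ Set.Icc a b, ∀ y ∈ Set.Icc a b, x ≤ y →
      (M * Real.exp V)⁻¹ * (y - x) ≤ H y - H x ∧ H y - H x ≤ M * Real.exp V * (y - x) := by
    intro x hx y hy hxy
    rcases eq_or_lt_of_le hxy with rfl | hlt
    · simp
    · have hev1 : ∀ᶠ k in Filter.atTop, f^[k] c < y :=
        hcPlim.eventually_lt_const (lt_of_le_of_lt hx.1 hlt)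
      have hev2 : ∀ᶠ k in Filter.atTop, x < g^[k] c :=
        hcNlim.eventually_const_lt (lt_of_lt_of_le hlt hy.2)
      set xk : ℕ → ℝ := fun k => max x (f^[k] c) with hxk_def
      set yk : ℕ → ℝ := fun k => min y (g^[k] c) with hyk_def
      have hxkt : Filter.Tendsto xk Filter.atTop (nhds x) := by
        have : Filter.Tendsto (fun k => max x (f^[k] c)) Filter.atTop (nhds (max x a)) :=
          Filter.Tendsto.max tendsto_const_nhds hcPlim
        rwa [max_eq_left hx.1] at this
      have hykt : Filter.Tendsto yk Filter.atTop (nhds y) := by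
        have : Filter.Tendsto (fun k => min y (g^[k] c)) Filter.atTop (nhds (min y b)) :=
          Filter.Tendsto.min tendsto_const_nhds hcNlim
        rwa [min_eq_left hy.2] at this
      have hxkm : ∀ k, xk k ∈ Set.Icc a b :=
        fun k => ⟨le_max_of_le_left hx.1, max_le hx.2 (hcPmem k).2⟩
      have hykm : ∀ k, yk k ∈ Set.Icc a b :=
        fun k => ⟨le_min hy.1 (hcNmem k).1, le_trans (min_le_left _ _) hy.2⟩
      have hHxk : Filter.Tendsto (fun k => H (xk k)) Filter.atTop (nhds (H x)) := by
        have h1 : Filter.Tendsto xk Filter.atTop (nhdsWithin x (Set.Icc a b)) :=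
          tendsto_nhdsWithin_of_tendsto_nhds_of_eventually_within xk hxkt
            (Filter.Eventually.of_forall hxkm)
        exact (hH_cont x hx).tendsto.comp h1
      have hHyk : Filter.Tendsto (fun k => H (yk k)) Filter.atTop (nhds (H y)) := by
        have h1 : Filter.Tendsto yk Filter.atTop (nhdsWithin y (Set.Icc a b)) :=
          tendsto_nhdsWithin_of_tendsto_nhds_of_eventually_within yk hykt
            (Filter.Eventually.of_forall hykm)
        exact (hH_cont y hy).tendsto.comp h1
      have hbnd : ∀ᶠ k in Filter.atTop,
          (M * Real.exp V)⁻¹ * (yk k - xk k) ≤ H (yk k) - H (xk k) ∧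
            H (yk k) - H (xk k) ≤ M * Real.exp V * (yk k - xk k) := by
        filter_upwards [hev1, hev2] with k h1 h2
        have hPN : f^[k] c ≤ g^[k] c := le_trans (hcPle_c k) (hcle_cN k)
        apply mainN k
        · exact ⟨le_max_right _ _, max_le h2.le hPN⟩
        · exact ⟨le_min h1.le hPN, min_le_right _ _⟩
        · exact max_le (le_min hxy h2.le) (le_min h1.le hPN)
      constructor
      · have t1 : Filter.Tendsto (fun k => (M * Real.exp V)⁻¹ * (yk k - xk k)) Filter.atTop
            (nhds ((M * Real.exp V)⁻¹ * (y - x))) := (hykt.sub hxkt).const_mul _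
        have t2 : Filter.Tendsto (fun k => H (yk k) - H (xk k)) Filter.atTop
            (nhds (H y - H x)) := hHyk.sub hHxk
        exact le_of_tendsto_of_tendsto t1 t2 (hbnd.mono fun k hk => hk.1)
      · have t1 : Filter.Tendsto (fun k => H (yk k) - H (xk k)) Filter.atTop
            (nhds (H y - H x)) := hHyk.sub hHxk
        have t2 : Filter.Tendsto (fun k => M * Real.exp V * (yk k - xk k)) Filter.atTop
            (nhds (M * Real.exp V * (y - x))) := (hykt.sub hxkt).const_mul _
        exact le_of_tendsto_of_tendsto t1 t2 (hbnd.mono fun k hk => hk.2)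
  intro x hx y hy
  rcases le_total x y with hxy | hyx
  · obtain ⟨l, u⟩ := ordered x hx y hy hxy
    have hHle : H x ≤ H y := HmonoOn hx hy hxy
    rw [abs_sub_comm x y, abs_sub_comm (H x) (H y),
      abs_of_nonneg (sub_nonneg.mpr hxy), abs_of_nonneg (sub_nonneg.mpr hHle)]
    exact ⟨l, u⟩
  · obtain ⟨l, u⟩ := ordered y hy x hx hyx
    have hHle : H y ≤ H x := HmonoOn hy hx hyx
    rw [abs_of_nonneg (sub_nonneg.mpr hyx), abs_of_nonneg (sub_nonneg.mpr hHle)]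
    exact ⟨l, u⟩
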